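/- The group generated by t1 = [[ω⁻¹,0],[0,ω]], t2 = [[ω⁻²,3ω],[0,ω²]], t3 = [[ω,0],[ω²,ω⁻¹]] (and −I) contains the elementary matrices [[1,3u],[0,1]] and [[1,0],[u,1]] for every unit u ∈ {±1,±ω,±ω⁻¹} of Z[ω]. -/

import Mathlib

/-- `ω = e^{πi/3}`, a primitive sixth root of unity. -/
noncomputable def ω : ℂ := Complex.exp (Real.pi * Complex.I / 3)

lemma ω_ne_zero : ω ≠ 0 := Complex.exp_ne_zero _

/-- The spin generator `t₁` as an element of `SL₂(ℂ)`. -/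
noncomputable def T₁ : Matrix.SpecialLinearGroup (Fin 2) ℂ :=
  ⟨!![ω⁻¹, 0; 0, ω], by
    simp [Matrix.det_fin_two_of, inv_mul_cancel₀ ω_ne_zero]⟩

/-- The spin generator `t₂` as an element of `SL₂(ℂ)`. -/
noncomputable def T₂ : Matrix.SpecialLinearGroup (Fin 2) ℂ :=
  ⟨!![(ω⁻¹)^2, 3 * ω; 0, ω^2], by
    simp [Matrix.det_fin_two_of]
    exact inv_mul_cancel₀ (pow_ne_zero 2 ω_ne_zero)⟩

/-- The spin generator `t₃` as an element of `SL₂(ℂ)`. -/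
noncomputable def T₃ : Matrix.SpecialLinearGroup (Fin 2) ℂ :=
  ⟨!![ω, 0; ω^2, ω⁻¹], by
    simp [Matrix.det_fin_two_of, mul_inv_cancel₀ ω_ne_zero]⟩

/-- `-I` as an element of `SL₂(ℂ)`. -/
noncomputable def negI : Matrix.SpecialLinearGroup (Fin 2) ℂ :=
  ⟨-1, by simp [Matrix.det_neg]⟩

/-- The upper elementary matrix `[[1, 3u],[0,1]]` in `SL₂(ℂ)`. -/
noncomputable def upperElem (u : ℂ) : Matrix.SpecialLinearGroup (Fin 2) ℂ :=
  ⟨!![1, 3 * u; 0, 1], by simp [Matrix.det_fin_two_of]⟩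

/-- The lower elementary matrix `[[1, 0],[u,1]]` in `SL₂(ℂ)`. -/
noncomputable def lowerElem (u : ℂ) : Matrix.SpecialLinearGroup (Fin 2) ℂ :=
  ⟨!![1, 0; u, 1], by simp [Matrix.det_fin_two_of]⟩

lemma ω_cube : ω^3 = -1 := by
  rw [ω, ← Complex.exp_nat_mul]
  norm_num
  rw [show (3:ℂ) * (Real.pi * Complex.I / 3) = Real.pi * Complex.I by ring,
    Complex.exp_pi_mul_I]

lemma ω_inv : ω⁻¹ = -ω^2 := by
  field_simp [ω_ne_zero]
  linear_combination ω_cube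

lemma ω_six : ω^6 = 1 := by linear_combination (ω^3 - 1) * ω_cube
lemma ω_nine : ω^9 = -1 := by linear_combination (ω^6 - ω^3 + 1) * ω_cube
lemma ω_twelve : ω^12 = 1 := by linear_combination (ω^9 - ω^6 + ω^3 - 1) * ω_cube

lemma rel1 : (T₁ * T₁ * T₁ * T₁ * T₂) * upperElem 1 = 1 := by
  ext i j
  fin_cases i <;> fin_cases j <;>
    simp only [Matrix.SpecialLinearGroup.coe_mul] <;>
    simp [T₁, T₂, upperElem, Matrix.mul_apply, Fin.sum_univ_succ, ω_inv] <;>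
    ring_nf <;> simp [ω_six, ω_nine, ω_twelve] <;> norm_num

lemma rel2 : (T₁ * T₃) * lowerElem 1 = 1 := by
  ext i j
  fin_cases i <;> fin_cases j <;>
    simp only [Matrix.SpecialLinearGroup.coe_mul] <;>
    simp [T₁, T₃, lowerElem, Matrix.mul_apply, Fin.sum_univ_succ, ω_inv] <;>
    ring_nf <;> simp [ω_six, ω_nine, ω_twelve, ω_cube] <;> norm_num

lemma conjU (u : ℂ) : T₁ * upperElem u = upperElem (-(ω * u)) * T₁ := by
  ext i j
  fin_cases i <;> fin_cases j <;>
    simp only [Matrix.SpecialLinearGroup.coe_mul] <;>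
    simp [T₁, upperElem, Matrix.mul_apply, Fin.sum_univ_succ, ω_inv] <;>
    ring

lemma conjL (u : ℂ) : T₁ * lowerElem u = lowerElem (ω^2 * u) * T₁ := by
  ext i j
  fin_cases i <;> fin_cases j <;>
    simp only [Matrix.SpecialLinearGroup.coe_mul] <;>
    simp [T₁, lowerElem, Matrix.mul_apply, Fin.sum_univ_succ, ω_inv]
  linear_combination (ω * u) * ω_cube

lemma invU (u : ℂ) : upperElem u * upperElem (-u) = 1 := by
  ext i j
  fin_cases i <;> fin_cases j <;>
    simp only [Matrix.SpecialLinearGroup.coe_mul] <;>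
    simp [upperElem, Matrix.mul_apply, Fin.sum_univ_succ] <;> ring

lemma invL (u : ℂ) : lowerElem u * lowerElem (-u) = 1 := by
  ext i j
  fin_cases i <;> fin_cases j <;>
    simp only [Matrix.SpecialLinearGroup.coe_mul] <;>
    simp [lowerElem, Matrix.mul_apply, Fin.sum_univ_succ] <;> ring

/-- The group generated by `t₁, t₂, t₃` (and `-I`) contains the elementary
matrices `[[1,3u],[0,1]]` and `[[1,0],[u,1]]` for every unit
`u ∈ {±1, ±ω, ±ω⁻¹}` of `ℤ[ω]`. -/
theorem elementary_matrices_in_spin_group :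
    ∀ u : ℂ, u ∈ ({1, -1, ω, -ω, ω⁻¹, -ω⁻¹} : Set ℂ) →
      upperElem u ∈ Subgroup.closure {T₁, T₂, T₃, negI} ∧
      lowerElem u ∈ Subgroup.closure {T₁, T₂, T₃, negI} := by
  set G := Subgroup.closure ({T₁, T₂, T₃, negI} : Set (Matrix.SpecialLinearGroup (Fin 2) ℂ)) with hG
  have hT1 : T₁ ∈ G := Subgroup.subset_closure (by simp)
  have hT2 : T₂ ∈ G := Subgroup.subset_closure (by simp)
  have hT3 : T₃ ∈ G := Subgroup.subset_closure (by simp)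
  -- step lemmas
  have stepU : ∀ u : ℂ, upperElem u ∈ G → upperElem (-(ω * u)) ∈ G := by
    intro u hu
    have hX : upperElem (-(ω * u)) = T₁ * upperElem u * T₁⁻¹ := by
      rw [conjU u, mul_inv_cancel_right]
    rw [hX]
    exact mul_mem (mul_mem hT1 hu) (inv_mem hT1)
  have stepL : ∀ u : ℂ, lowerElem u ∈ G → lowerElem (ω^2 * u) ∈ G := by
    intro u hu
    have hX : lowerElem (ω^2 * u) = T₁ * lowerElem u * T₁⁻¹ := by
      rw [conjL u, mul_inv_cancel_right]
    rw [hX]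
    exact mul_mem (mul_mem hT1 hu) (inv_mem hT1)
  have negU : ∀ u : ℂ, upperElem u ∈ G → upperElem (-u) ∈ G := by
    intro u hu
    rw [← inv_eq_of_mul_eq_one_right (invU u)]
    exact inv_mem hu
  have negL : ∀ u : ℂ, lowerElem u ∈ G → lowerElem (-u) ∈ G := by
    intro u hu
    rw [← inv_eq_of_mul_eq_one_right (invL u)]
    exact inv_mem hu
  -- base cases
  have hU1 : upperElem 1 ∈ G := by
    rw [← inv_eq_of_mul_eq_one_right rel1]
    exact inv_mem (mul_mem (mul_mem (mul_mem (mul_mem hT1 hT1) hT1) hT1) hT2)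
  have hL1 : lowerElem 1 ∈ G := by
    rw [← inv_eq_of_mul_eq_one_right rel2]
    exact inv_mem (mul_mem hT1 hT3)
  -- orbits
  have hUnegω : upperElem (-ω) ∈ G := by
    have := stepU 1 hU1
    rwa [mul_one] at this
  have hUnegωinv : upperElem (-ω⁻¹) ∈ G := by
    have := stepU (-ω) hUnegω
    rwa [show -(ω * -ω) = -ω⁻¹ by rw [ω_inv]; ring] at this
  have hLnegωinv : lowerElem (-ω⁻¹) ∈ G := by
    have := stepL 1 hL1
    rwa [show ω^2 * 1 = -ω⁻¹ by rw [ω_inv]; ring] at this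
  have hLnegω : lowerElem (-ω) ∈ G := by
    have := stepL (-ω⁻¹) hLnegωinv
    rwa [show ω^2 * -ω⁻¹ = -ω by rw [ω_inv]; linear_combination ω * ω_cube] at this
  intro u hu
  rcases hu with h | h | h | h | h | h <;> subst h
  · exact ⟨hU1, hL1⟩
  · exact ⟨negU 1 hU1, negL 1 hL1⟩
  · refine ⟨?_, ?_⟩
    · have := negU (-ω) hUnegω; rwa [neg_neg] at this
    · have := negL (-ω) hLnegω; rwa [neg_neg] at this
  · exact ⟨hUnegω, hLnegω⟩
  · refine ⟨?_, ?_⟩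
    · have := negU (-ω⁻¹) hUnegωinv; rwa [neg_neg] at this
    · have := negL (-ω⁻¹) hLnegωinv; rwa [neg_neg] at this
  · exact ⟨hUnegωinv, hLnegωinv⟩
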